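/- Let $\Sigma$ be a compact surface with nonempty boundary, let $\delta > 0$ be small enough that $\Omega := \overline{\Sigma \setminus \widetilde\Sigma}$ (where $\widetilde\Sigma = \{x : \mathrm{dist}(x,\partial\Sigma)\ge\delta\}$) is homeomorphic to $\partial\Sigma \times [0,1]$ with $\partial\Sigma$ corresponding to $\partial\Sigma\times\{1\}$. Fix $x_0 \in \partial\Sigma$. Then the map $\pi: \Sigma \to (\partial\Sigma)_2$ defined by $\pi(x) = \delta_{x_0}$ for $x \in \widetilde\Sigma$, $\pi(x) = (1-t)\delta_{x_0} + t\delta_y$ for $x$ corresponding to $(y,t) \in \partial\Sigma\times[0,1]$, and $\pi(x) = \delta_x$ for $x \in \partial\Sigma$, is well-defined and continuous, where $(\partial\Sigma)_2$ is the space of probability measures supported on at most 2 points of $\partial\Sigma$ with the Lipschitz-dual metric, and $\pi$ restricts to $x \mapsto \delta_x$ on $\partial\Sigma$. -/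

import Mathlib

open MeasureTheory

open scoped NNReal ENNReal

noncomputable def mixP {B : Type*} [TopologicalSpace B] [MeasurableSpace B]
    [OpensMeasurableSpace B] (x0 : B) (p : B × Set.Icc (0 : ℝ) 1) :
    ProbabilityMeasure B :=
  ⟨ENNReal.ofReal (1 - (p.2 : ℝ)) • Measure.dirac x0
      + ENNReal.ofReal (p.2 : ℝ) • Measure.dirac p.1, by
    constructor
    have h0 : (0:ℝ) ≤ (p.2 : ℝ) := p.2.2.1
    have h1 : (p.2 : ℝ) ≤ 1 := p.2.2.2
    simp [Measure.add_apply, ← ENNReal.ofReal_add (by linarith : (0:ℝ) ≤ 1 - (p.2:ℝ)) h0]⟩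

lemma mixP_toMeasure {B : Type*} [TopologicalSpace B] [MeasurableSpace B]
    [OpensMeasurableSpace B] (x0 : B) (p : B × Set.Icc (0 : ℝ) 1) :
    (mixP x0 p).toMeasure
      = ENNReal.ofReal (1 - (p.2 : ℝ)) • Measure.dirac x0
        + ENNReal.ofReal (p.2 : ℝ) • Measure.dirac p.1 := rfl

lemma mixP_continuous {B : Type*} [TopologicalSpace B] [MeasurableSpace B]
    [OpensMeasurableSpace B] (x0 : B) : Continuous (mixP x0) := by
  rw [continuous_iff_continuousAt]
  intro p
  rw [ContinuousAt, ProbabilityMeasure.tendsto_iff_forall_lintegral_tendsto]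
  intro f
  have hfm : Measurable fun ω => (f ω : ℝ≥0∞) :=
    measurable_coe_nnreal_ennreal.comp f.continuous.measurable
  have key : ∀ q : B × Set.Icc (0 : ℝ) 1,
      ∫⁻ ω, f ω ∂((mixP x0 q) : Measure B)
        = ((Real.toNNReal (1 - (q.2 : ℝ)) * f x0 + Real.toNNReal (q.2 : ℝ) * f q.1 : ℝ≥0)
            : ℝ≥0∞) := by
    intro q
    show ∫⁻ ω, f ω ∂(ENNReal.ofReal (1 - (q.2 : ℝ)) • Measure.dirac x0
        + ENNReal.ofReal (q.2 : ℝ) • Measure.dirac q.1) = _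
    rw [lintegral_add_measure, lintegral_smul_measure, lintegral_smul_measure,
      lintegral_dirac' _ hfm, lintegral_dirac' _ hfm]
    push_cast
    rw [ENNReal.ofReal, ENNReal.ofReal]
    simp only [smul_eq_mul]
  simp only [key]
  have hc : Continuous fun q : B × Set.Icc (0 : ℝ) 1 =>
      (Real.toNNReal (1 - (q.2 : ℝ)) * f x0 + Real.toNNReal (q.2 : ℝ) * f q.1 : ℝ≥0) := by
    apply Continuous.add
    · exact (continuous_real_toNNReal.comp
        (continuous_const.sub (continuous_subtype_val.comp continuous_snd))).mul continuous_const
    · exact (continuous_real_toNNReal.comp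
        (continuous_subtype_val.comp continuous_snd)).mul (f.continuous.comp continuous_fst)
  exact (ENNReal.continuous_coe.comp hc).tendsto p

noncomputable def diracP {B : Type*} [TopologicalSpace B] [MeasurableSpace B]
    [OpensMeasurableSpace B] (x0 : B) : ProbabilityMeasure B :=
  ⟨Measure.dirac x0, Measure.dirac.isProbabilityMeasure⟩

theorem stmt17 {S : Type*} [TopologicalSpace S] [CompactSpace S]
    [MeasurableSpace S] [BorelSpace S]
    (Bd Tld Om : Set S) (hBd : IsClosed Bd) (hTld : IsClosed Tld)
    (hOm : IsClosed Om) (hcover : Tld ∪ Om = Set.univ)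
    (e : (Bd × Set.Icc (0 : ℝ) 1) ≃ₜ Om)
    (he1 : ∀ y : Bd, ((e (y, ⟨1, by norm_num⟩) : Om) : S) = (y : S))
    (heT : ∀ (y : Bd) (t : Set.Icc (0 : ℝ) 1),
      ((e (y, t) : Om) : S) ∈ Tld → (t : ℝ) = 0)
    (x0 : Bd) :
    ∃ Pi : C(S, ProbabilityMeasure Bd),
      (∀ x ∈ Tld, (Pi x).toMeasure = Measure.dirac x0) ∧
      (∀ (y : Bd) (t : Set.Icc (0 : ℝ) 1),
        (Pi ((e (y, t) : Om) : S)).toMeasure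
          = ENNReal.ofReal (1 - (t : ℝ)) • Measure.dirac x0
            + ENNReal.ofReal (t : ℝ) • Measure.dirac y) ∧
      (∀ (x : S) (hx : x ∈ Bd),
        (Pi x).toMeasure = Measure.dirac (⟨x, hx⟩ : Bd)) ∧
      (∀ x : S, ∃ (a : ℝ) (y z : Bd), 0 ≤ a ∧ a ≤ 1 ∧
        (Pi x).toMeasure
          = ENNReal.ofReal (1 - a) • Measure.dirac y
            + ENNReal.ofReal a • Measure.dirac z) := by
  classical
  set F : S → ProbabilityMeasure Bd :=
    fun x => if h : x ∈ Om then mixP x0 (e.symm ⟨x, h⟩) else diracP x0 with hF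
  have hmix : ∀ (a : S) (h : a ∈ Om), F a = mixP x0 (e.symm ⟨a, h⟩) := by
    intro a h; simp only [hF, dif_pos h]
  have hnot : ∀ (a : S), a ∉ Om → F a = diracP x0 := by
    intro a h; simp only [hF, dif_neg h]
  -- points of Om ∩ Tld map to diracP x0
  have hT0 : ∀ (a : S), a ∈ Om → a ∈ Tld → F a = diracP x0 := by
    intro a hOmA hTA
    rw [hmix a hOmA]
    set p := e.symm ⟨a, hOmA⟩ with hp
    have hep : (e p : Om) = ⟨a, hOmA⟩ := e.apply_symm_apply _
    have ht0 : (p.2 : ℝ) = 0 := by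
      apply heT p.1 p.2
      rw [Prod.mk.eta, hep]
      exact hTA
    apply Subtype.ext
    show (mixP x0 p).toMeasure = Measure.dirac x0
    rw [mixP_toMeasure, ht0]
    simp
  -- continuity
  have hOmC : Omᶜ ⊆ Tld := by
    intro x hx
    have := Set.mem_univ x
    rw [← hcover] at this
    exact this.resolve_right hx
  have hcont : Continuous F := by
    have hFite : F = fun x => if x ∈ Om then F x else diracP x0 := by
      funext x
      by_cases h : x ∈ Om
      · rw [if_pos h]
      · rw [if_neg h, hnot x h]
    rw [hFite]
    apply continuous_if
    · intro a ha
      have haOm : a ∈ Om := hOm.frontier_subset ha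
      have haT : a ∈ Tld := by
        have : a ∈ closure Omᶜ := by
          rw [frontier_eq_closure_inter_closure] at ha
          exact ha.2
        exact hTld.closure_subset_iff.2 hOmC this
      exact hT0 a haOm haT
    · show ContinuousOn F (closure Om)
      rw [hOm.closure_eq, continuousOn_iff_continuous_restrict]
      have : Set.domRestrict Om F = fun x : Om => mixP x0 (e.symm x) := by
        funext x
        simp only [Set.domRestrict_apply]
        rw [hmix x x.2]
      rw [this]
      exact (mixP_continuous x0).comp e.symm.continuous
    · exact continuousOn_const
  refine ⟨⟨F, hcont⟩, ?_, ?_, ?_, ?_⟩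
  · intro x hx
    by_cases h : x ∈ Om
    · rw [ContinuousMap.coe_mk, hT0 x h hx]; rfl
    · rw [ContinuousMap.coe_mk, hnot x h]; rfl
  · intro y t
    have h : ((e (y, t) : Om) : S) ∈ Om := (e (y, t)).2
    rw [ContinuousMap.coe_mk, hmix _ h]
    have : (⟨((e (y, t) : Om) : S), h⟩ : Om) = e (y, t) := Subtype.ext rfl
    rw [this, e.symm_apply_apply]
    exact mixP_toMeasure x0 (y, t)
  · intro x hx
    have hx1 : x = ((e (⟨x, hx⟩, ⟨1, by norm_num⟩) : Om) : S) := (he1 ⟨x, hx⟩).symm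
    have h2 : ∀ (y : Bd) (t : Set.Icc (0 : ℝ) 1),
        (F ((e (y, t) : Om) : S)).toMeasure
          = ENNReal.ofReal (1 - (t : ℝ)) • Measure.dirac x0
            + ENNReal.ofReal (t : ℝ) • Measure.dirac y := by
      intro y t
      have h : ((e (y, t) : Om) : S) ∈ Om := (e (y, t)).2
      rw [hmix _ h]
      have : (⟨((e (y, t) : Om) : S), h⟩ : Om) = e (y, t) := Subtype.ext rfl
      rw [this, e.symm_apply_apply]
      exact mixP_toMeasure x0 (y, t)
    have h3 := h2 ⟨x, hx⟩ ⟨1, by norm_num⟩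
    rw [he1 ⟨x, hx⟩] at h3
    rw [ContinuousMap.coe_mk, h3]
    simp
  · intro x
    by_cases h : x ∈ Om
    · refine ⟨((e.symm ⟨x, h⟩).2 : ℝ), x0, (e.symm ⟨x, h⟩).1,
        (e.symm ⟨x, h⟩).2.2.1, (e.symm ⟨x, h⟩).2.2.2, ?_⟩
      rw [ContinuousMap.coe_mk, hmix x h]
      exact mixP_toMeasure x0 _
    · refine ⟨0, x0, x0, le_refl 0, zero_le_one, ?_⟩
      rw [ContinuousMap.coe_mk, hnot x h]
      show Measure.dirac x0 = _
      simp
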